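/- Let (R,m) be a Noetherian local ring, n ≥ 2, J = (f_1,...,f_n) a reduction of I = (f_1,...,f_n,f), and suppose rt(I) = L. Then f^L ∈ J·I^{L-1}, i.e., rn_J(I) ≤ L - 1. (Derivation: E(I)_d = 0 for d ≥ L+1 forces (J·I^{d-1} : f^d) = (J·I^{d-2} : f^{d-1}) for all d ≥ L+1, and since J is a reduction of I, (J·I^{m-1} : f^m) = R for m large, so (J·I^{L-1} : f^L) = R.) -/

import Mathlib

open Ideal Submodule

variable {R : Type*} [CommRing R]

/-- The linear map `(a₁,…,aₘ) ↦ Σ aⱼ zⱼ`. -/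
noncomputable def sumMul {m : ℕ} (z : Fin m → R) : (Fin m → R) →ₗ[R] R :=
  ∑ j, (LinearMap.proj j : (Fin m → R) →ₗ[R] R).smulRight (z j)

/-- The degree-`d` cycles of the Koszul complex of the degree-one elements
`z₁t,…,zₘt` on the Rees algebra of `I`. -/
noncomputable def kosZ1 {m : ℕ} (I : Ideal R) (z : Fin m → R) (d : ℕ) :
    Submodule R (Fin m → R) :=
  (⨅ j : Fin m, Submodule.comap (LinearMap.proj j) ((I ^ (d - 1) : Ideal R) : Submodule R R))
    ⊓ LinearMap.ker (sumMul z)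

/-- The degree-`d` boundaries of the Koszul complex of `z₁t,…,zₘt` on the Rees algebra
of `I`. -/
noncomputable def kosB1 {m : ℕ} (I : Ideal R) (z : Fin m → R) (d : ℕ) :
    Submodule R (Fin m → R) :=
  Submodule.span R {v | ∃ j l : Fin m, ∃ u ∈ I ^ (d - 2),
    v = Pi.single l (z j * u) - Pi.single j (z l * u)}

/-- The degree-`d` component of the first Koszul homology `H₁(z₁t,…,zₘt; R(I))`;
for the full sequence of generators of `I` this computes the `d`-th module of effective
relations `E(I)_d`. -/
noncomputable abbrev kosH1 {m : ℕ} (I : Ideal R) (z : Fin m → R) (d : ℕ) :=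
  ↥(kosZ1 I z d) ⧸ (Submodule.comap (kosZ1 I z d).subtype (kosB1 I z d))

/-- The reduction number of `I` with respect to `J`. -/
noncomputable def reductionNumber (J I : Ideal R) : ℕ :=
  sInf {r | I ^ (r + 1) = J * I ^ r}

/-- The relation type of `I`, computed through the vanishing of the modules of effective
relations: the smallest `L ≥ 1` such that `E(I)_d = H₁(z₁t,…,zₘt; R(I))_d = 0` for all
`d ≥ L + 1`, where `z` is a system of generators of `I`. -/
noncomputable def relationTypeKoszul {m : ℕ} (I : Ideal R) (z : Fin m → R) : ℕ :=
  sInf {L | 1 ≤ L ∧ ∀ d : ℕ, L + 1 ≤ d → kosZ1 I z d ≤ kosB1 I z d}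


open MvPolynomial

noncomputable def kosW {m : ℕ} (j : Fin m) (μ : Fin m →₀ ℕ) : ℕ :=
  ∑ t ∈ Finset.univ.filter (fun t : Fin m => t < j), μ t

def kosSyzSet (m : ℕ) (R : Type*) [CommRing R] : Set (Fin m → MvPolynomial (Fin m) R) :=
  {v | ∃ (j l : Fin m) (M : Fin m →₀ ℕ),
    v = Pi.single l (monomial M 1 * X j) - Pi.single j (monomial M 1 * X l)}

theorem kosSyz {m : ℕ} (H : Fin m → MvPolynomial (Fin m) R)
    (hH : ∑ j, X j * H j = 0) :
    H ∈ Submodule.span R (kosSyzSet m R) := by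
  generalize hN : (∑ j, ∑ μ ∈ (H j).support, kosW j μ) = N
  induction N using Nat.strong_induction_on generalizing H with
  | _ N ih =>
  rcases Nat.eq_zero_or_pos N with h0 | hpos
  · -- measure zero: H = 0
    subst h0
    have hw : ∀ j : Fin m, ∀ μ ∈ (H j).support, kosW j μ = 0 := by
      intro j μ hμ
      exact (Finset.sum_eq_zero_iff.mp
        ((Finset.sum_eq_zero_iff.mp hN) j (Finset.mem_univ j))) μ hμ
    have : H = 0 := by
      funext j
      ext μ
      simp only [Pi.zero_apply, coeff_zero]
      by_cases hμ : μ ∈ (H j).support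
      swap
      · simpa using hμ
      · have hμ0 : ∀ t : Fin m, t < j → μ t = 0 := by
          intro t ht
          have h := hw j μ hμ
          unfold kosW at h
          exact (Finset.sum_eq_zero_iff.mp h) t (by simp [ht])
        set ν : Fin m →₀ ℕ := μ + Finsupp.single j 1 with hν
        have hcoeff : coeff ν (∑ k, X k * H k) = 0 := by rw [hH]; simp
        rw [coeff_sum] at hcoeff
        have hterm : ∀ k : Fin m, k ∈ Finset.univ → k ≠ j →
            coeff ν (X k * H k) = 0 := by
          intro k _ hkj
          rw [coeff_X_mul']
          by_cases hks : k ∈ ν.support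
          · simp only [hks, if_true]
            by_contra hcon
            have hmem : ν - Finsupp.single k 1 ∈ (H k).support :=
              mem_support_iff.mpr hcon
            have hwk := hw k _ hmem
            unfold kosW at hwk
            have hμk : μ k ≠ 0 := by
              have h1 := Finsupp.mem_support_iff.mp hks
              rw [hν, Finsupp.add_apply, Finsupp.single_apply,
                if_neg (Ne.symm hkj)] at h1
              simpa using h1
            have hjk : j < k := by
              rcases lt_trichotomy j k with h | h | h
              · exact h
              · exact absurd h.symm hkj
              · exact absurd (hμ0 k h) hμk
            have hz := (Finset.sum_eq_zero_iff.mp hwk) j (by simp [hjk])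
            rw [Finsupp.tsub_apply, Finsupp.single_apply,
              if_neg (Ne.symm hjk.ne)] at hz
            have hνj : ν j = μ j + 1 := by
              rw [hν, Finsupp.add_apply, Finsupp.single_apply, if_pos rfl]
            omega
          · simp [hks]
        rw [Finset.sum_eq_single j hterm (by simp)] at hcoeff
        rw [coeff_X_mul'] at hcoeff
        have hjν : j ∈ ν.support := by
          rw [Finsupp.mem_support_iff, hν, Finsupp.add_apply, Finsupp.single_apply,
            if_pos rfl]
          omega
        rw [if_pos hjν] at hcoeff
        have hsub : ν - Finsupp.single j 1 = μ := by
          ext i; rw [hν, Finsupp.tsub_apply, Finsupp.add_apply]; omega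
        rwa [hsub] at hcoeff
    rw [this]
    exact Submodule.zero_mem _
  · -- positive measure
    have hex : ∃ j : Fin m, ∑ μ ∈ (H j).support, kosW j μ ≠ 0 := by
      by_contra hcon
      push_neg at hcon
      rw [Finset.sum_eq_zero (fun j _ => hcon j)] at hN
      omega
    obtain ⟨j, hj⟩ := hex
    obtain ⟨μ, hμmem, hμw⟩ := Finset.exists_ne_zero_of_sum_ne_zero hj
    obtain ⟨t, htmem, htne⟩ := Finset.exists_ne_zero_of_sum_ne_zero hμw
    have htj : t < j := (Finset.mem_filter.mp htmem).2
    have htsupp : t ∈ μ.support := Finsupp.mem_support_iff.mpr htne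
    set k : Fin m := μ.support.min' ⟨t, htsupp⟩ with hk
    have hksupp : k ∈ μ.support := Finset.min'_mem _ _
    have hkt : k ≤ t := Finset.min'_le _ _ htsupp
    have hkj : k < j := lt_of_le_of_lt hkt htj
    have hkmin : ∀ t' : Fin m, t' < k → μ t' = 0 := by
      intro t' ht'
      by_contra hcon
      exact absurd (Finset.min'_le _ _ (Finsupp.mem_support_iff.mpr hcon))
        (not_le.mpr ht')
    set c : R := coeff μ (H j) with hcdef
    have hcne : c ≠ 0 := mem_support_iff.mp hμmem
    set M : Fin m →₀ ℕ := μ - Finsupp.single k 1 with hM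
    have hMk : M + Finsupp.single k 1 = μ := by
      rw [hM]
      exact tsub_add_cancel_of_le (by
        rw [Finsupp.single_le_iff]
        exact Nat.one_le_iff_ne_zero.mpr (Finsupp.mem_support_iff.mp hksupp))
    set ν' : Fin m →₀ ℕ := M + Finsupp.single j 1 with hν'
    set gg : Fin m → MvPolynomial (Fin m) R :=
      Pi.single k (monomial M 1 * X j) - Pi.single j (monomial M 1 * X k) with hgg
    have hggmem : gg ∈ kosSyzSet m R := ⟨j, k, M, rfl⟩
    have hXk : (X k : MvPolynomial (Fin m) R) = monomial (Finsupp.single k 1) 1 := rfl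
    have hXj : (X j : MvPolynomial (Fin m) R) = monomial (Finsupp.single j 1) 1 := rfl
    have hmonk : (monomial M 1 : MvPolynomial (Fin m) R) * X k = monomial μ 1 := by
      rw [hXk, monomial_mul, mul_one, hMk]
    have hmonj : (monomial M 1 : MvPolynomial (Fin m) R) * X j = monomial ν' 1 := by
      rw [hXj, monomial_mul, mul_one]
    set H' : Fin m → MvPolynomial (Fin m) R := H + c • gg with hH'
    have hkjne : k ≠ j := ne_of_lt hkj
    have hH'j : H' j = H j - monomial μ c := by
      simp only [hH', hgg, Pi.add_apply, Pi.smul_apply, Pi.sub_apply]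
      rw [Pi.single_eq_of_ne (Ne.symm hkjne), Pi.single_eq_same, hmonk]
      rw [smul_sub, smul_zero, smul_monomial, smul_eq_mul, mul_one]
      ring
    have hH'k : H' k = H k + monomial ν' c := by
      simp only [hH', hgg, Pi.add_apply, Pi.smul_apply, Pi.sub_apply]
      rw [Pi.single_eq_same, Pi.single_eq_of_ne hkjne, hmonj]
      rw [sub_zero, smul_monomial, smul_eq_mul, mul_one]
    have hH'i : ∀ i : Fin m, i ≠ j → i ≠ k → H' i = H i := by
      intro i hij hik
      simp only [hH', hgg, Pi.add_apply, Pi.smul_apply, Pi.sub_apply]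
      rw [Pi.single_eq_of_ne hik, Pi.single_eq_of_ne hij]
      simp
    have hcycle : ∑ i, X i * H' i = 0 := by
      have h1 : ∑ i, X i * (Pi.single k (monomial M 1 * X j) :
          Fin m → MvPolynomial (Fin m) R) i = X k * (monomial M 1 * X j) := by
        rw [Finset.sum_eq_single k]
        · rw [Pi.single_eq_same]
        · intro b _ hb; rw [Pi.single_eq_of_ne hb]; ring
        · simp
      have h2 : ∑ i, X i * (Pi.single j (monomial M 1 * X k) :
          Fin m → MvPolynomial (Fin m) R) i = X j * (monomial M 1 * X k) := by
        rw [Finset.sum_eq_single j]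
        · rw [Pi.single_eq_same]
        · intro b _ hb; rw [Pi.single_eq_of_ne hb]; ring
        · simp
      have hgcyc : ∑ i, X i * gg i = 0 := by
        simp only [hgg, Pi.sub_apply, mul_sub, Finset.sum_sub_distrib, h1, h2]
        ring
      simp only [hH', Pi.add_apply, Pi.smul_apply, mul_add, Finset.sum_add_distrib, hH,
        mul_smul_comm, ← Finset.smul_sum, hgcyc, smul_zero, add_zero]
    -- coordinate estimates
    have hsubj : (H' j).support ⊆ (H j).support.erase μ := by
      intro x hx
      rw [hH'j] at hx
      have hxc := mem_support_iff.mp hx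
      rw [MvPolynomial.coeff_sub, coeff_monomial] at hxc
      by_cases hxμ : x = μ
      · subst hxμ; rw [if_pos rfl, hcdef, sub_self] at hxc; exact absurd rfl hxc
      · rw [if_neg (fun h => hxμ h.symm), sub_zero] at hxc
        exact Finset.mem_erase.mpr ⟨hxμ, mem_support_iff.mpr hxc⟩
    have hltj : ∑ μ'' ∈ (H' j).support, kosW j μ'' <
        ∑ μ'' ∈ (H j).support, kosW j μ'' := by
      have h1 : ∑ μ'' ∈ (H' j).support, kosW j μ'' ≤
          ∑ μ'' ∈ (H j).support.erase μ, kosW j μ'' :=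
        Finset.sum_le_sum_of_subset hsubj
      have h2 := Finset.add_sum_erase _ (kosW j) hμmem
      omega
    have hlek : ∑ μ'' ∈ (H' k).support, kosW k μ'' ≤
        ∑ μ'' ∈ (H k).support, kosW k μ'' := by
      have hsub : (H' k).support ⊆ insert ν' (H k).support := by
        intro x hx
        rw [hH'k] at hx
        have hxc := mem_support_iff.mp hx
        rw [MvPolynomial.coeff_add, coeff_monomial] at hxc
        by_cases hxν : x = ν'
        · exact Finset.mem_insert.mpr (Or.inl hxν)
        · rw [if_neg (fun h => hxν h.symm), add_zero] at hxc
          exact Finset.mem_insert.mpr (Or.inr (mem_support_iff.mpr hxc))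
      have hwν' : kosW k ν' = 0 := by
        unfold kosW
        apply Finset.sum_eq_zero
        intro t' ht'
        have ht'k : t' < k := (Finset.mem_filter.mp ht').2
        have h1 : μ t' = 0 := hkmin t' ht'k
        have h2 : (Finsupp.single j (1:ℕ)) t' = 0 := by
          rw [Finsupp.single_apply, if_neg (Ne.symm (lt_trans ht'k hkj).ne)]
        have h3 : M t' = 0 := by
          rw [hM, Finsupp.tsub_apply, h1]; simp
        rw [hν', Finsupp.add_apply, h2, h3]
        rfl
      calc ∑ μ'' ∈ (H' k).support, kosW k μ''
          ≤ ∑ μ'' ∈ insert ν' (H k).support, kosW k μ'' :=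
            Finset.sum_le_sum_of_subset hsub
        _ ≤ kosW k ν' + ∑ μ'' ∈ (H k).support, kosW k μ'' := by
            by_cases hν'mem : ν' ∈ (H k).support
            · rw [Finset.insert_eq_self.mpr hν'mem]; omega
            · rw [Finset.sum_insert hν'mem]
        _ = ∑ μ'' ∈ (H k).support, kosW k μ'' := by rw [hwν', zero_add]
    have hmeas : ∑ i, ∑ μ'' ∈ (H' i).support, kosW i μ'' < N := by
      rw [← hN]
      apply Finset.sum_lt_sum
      · intro i _
        rcases eq_or_ne i j with rfl | hij
        · exact hltj.le
        · rcases eq_or_ne i k with rfl | hik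
          · exact hlek
          · rw [hH'i i hij hik]
      · exact ⟨j, Finset.mem_univ j, hltj⟩
    have hH'mem := ih _ hmeas H' hcycle rfl
    have hrepr : H = H' - c • gg := by rw [hH']; abel
    rw [hrepr]
    exact Submodule.sub_mem _ hH'mem
      (Submodule.smul_mem _ _ (Submodule.subset_span hggmem))

section Homog
open Finsupp

variable {m : ℕ} {z : Fin m → R} {I : Ideal R}

theorem finsupp_degree_univ (ν : Fin m →₀ ℕ) : ν.degree = ∑ i, ν i := by
  rw [Finsupp.degree]
  apply Finset.sum_subset (Finset.subset_univ _)
  intro i _ hi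
  simpa using hi

/-- evaluation of a homogeneous polynomial of degree `e` at elements of `I` lands in `I^e` -/
theorem aeval_mem_pow (hz : ∀ i, z i ∈ I) {e : ℕ} {p : MvPolynomial (Fin m) R}
    (hp : p ∈ homogeneousSubmodule (Fin m) R e) :
    MvPolynomial.aeval z p ∈ I ^ e := by
  have key : ∀ μ : Fin m →₀ ℕ, (μ.prod fun i k => z i ^ k) ∈ I ^ μ.degree := by
    intro μ
    rw [Finsupp.prod, Finsupp.degree_apply]
    classical
    induction μ.support using Finset.induction_on with
    | empty => simp [Ideal.one_eq_top]
    | @insert a s ha ihs =>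
      rw [Finset.prod_insert ha, Finset.sum_insert ha, pow_add]
      exact Ideal.mul_mem_mul (Ideal.pow_mem_pow (hz a) _) ihs
  have hrw : MvPolynomial.aeval z p
      = ∑ μ ∈ p.support, MvPolynomial.aeval z (MvPolynomial.monomial μ
          (MvPolynomial.coeff μ p)) := by
    rw [← map_sum]
    congr 1
    exact p.as_sum
  rw [hrw]
  apply Submodule.sum_mem
  intro μ hμ
  have hdeg : μ.degree = e := by
    rw [Finsupp.degree_eq_weight_one]
    exact (MvPolynomial.mem_homogeneousSubmodule _ _).mp hp
      (MvPolynomial.mem_support_iff.mp hμ)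
  rw [MvPolynomial.aeval_monomial]
  exact Ideal.mul_mem_left _ _ (hdeg ▸ key μ)

/-- every element of `I^e` is the value of a homogeneous polynomial of degree `e` -/
theorem exists_homog_lift (hzI : Ideal.span (Set.range z) = I) (e : ℕ) :
    ∀ a ∈ I ^ e, ∃ A ∈ homogeneousSubmodule (Fin m) R e, MvPolynomial.aeval z A = a := by
  induction e with
  | zero =>
    intro a _
    exact ⟨MvPolynomial.C a, (MvPolynomial.mem_homogeneousSubmodule _ _).mpr
      (MvPolynomial.isHomogeneous_C _ _), by simp⟩
  | succ e ihe =>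
    intro a ha
    rw [pow_succ] at ha
    refine Submodule.mul_induction_on ha ?_ ?_
    · intro x hx y hy
      obtain ⟨A, hA, hAx⟩ := ihe x hx
      rw [← hzI] at hy
      obtain ⟨c, hc⟩ := (Finsupp.mem_span_range_iff_exists_finsupp).mp hy
      set B : MvPolynomial (Fin m) R := c.sum fun i ci => MvPolynomial.C ci * MvPolynomial.X i
        with hB
      have hBmem : B ∈ homogeneousSubmodule (Fin m) R 1 := by
        rw [hB, Finsupp.sum]
        apply Submodule.sum_mem
        intro i _
        rw [MvPolynomial.mem_homogeneousSubmodule]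
        simpa using (MvPolynomial.isHomogeneous_C _ (c i)).mul
          (MvPolynomial.isHomogeneous_X _ i)
      have hBy : MvPolynomial.aeval z B = y := by
        rw [hB, Finsupp.sum, map_sum, ← hc, Finsupp.sum]
        apply Finset.sum_congr rfl
        intro i _
        simp [smul_eq_mul]
      refine ⟨A * B, ?_, by rw [_root_.map_mul, hAx, hBy]⟩
      rw [MvPolynomial.mem_homogeneousSubmodule] at hA hBmem ⊢
      exact hA.mul hBmem
    · rintro x y ⟨A, hA, hAx⟩ ⟨B, hB, hBy⟩
      exact ⟨A + B, Submodule.add_mem _ hA hB, by rw [map_add, hAx, hBy]⟩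

/-- homogeneous component of a product with a homogeneous polynomial -/
theorem homogeneousComponent_mul_right {e d : ℕ} (hed : e ≤ d)
    {q : MvPolynomial (Fin m) R} (hq : q ∈ homogeneousSubmodule (Fin m) R e)
    (p : MvPolynomial (Fin m) R) :
    MvPolynomial.homogeneousComponent d (p * q) =
      MvPolynomial.homogeneousComponent (d - e) p * q := by
  conv_lhs => rw [← MvPolynomial.sum_homogeneousComponent p]
  rw [Finset.sum_mul, map_sum]
  have hterm : ∀ i : ℕ,
      MvPolynomial.homogeneousComponent d (MvPolynomial.homogeneousComponent i p * q)
        = if d = i + e then MvPolynomial.homogeneousComponent i p * q else 0 := by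
    intro i
    exact MvPolynomial.homogeneousComponent_of_mem
      ((MvPolynomial.mem_homogeneousSubmodule _ _).mpr
        ((MvPolynomial.homogeneousComponent_isHomogeneous i p).mul
          ((MvPolynomial.mem_homogeneousSubmodule _ _).mp hq)))
  rw [Finset.sum_congr rfl (fun i _ => hterm i)]
  rw [Finset.sum_eq_single (d - e)]
  · rw [if_pos (by omega)]
  · intro b _ hb
    rw [if_neg (by omega)]
  · intro hmem
    rw [Finset.mem_range, not_lt] at hmem
    have h0 : MvPolynomial.homogeneousComponent (d - e) p = 0 :=
      MvPolynomial.homogeneousComponent_eq_zero (d - e) p (by omega)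
    simp [h0]

/-- a homogeneous polynomial of degree `e ≥ 1` is a combination `∑ X j * r j` with `r j`
homogeneous of degree `e - 1` -/
theorem homog_decompose (hm : 0 < m) {e : ℕ} (he : 1 ≤ e)
    {p : MvPolynomial (Fin m) R} (hp : p ∈ homogeneousSubmodule (Fin m) R e) :
    ∃ r : Fin m → MvPolynomial (Fin m) R,
      (∀ j, r j ∈ homogeneousSubmodule (Fin m) R (e - 1)) ∧
        p = ∑ j, MvPolynomial.X j * r j := by
  classical
  have hhp := (MvPolynomial.mem_homogeneousSubmodule _ _).mp hp
  have hdegsupp : ∀ μ ∈ p.support, μ.degree = e := by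
    intro μ hμ
    rw [Finsupp.degree_eq_weight_one]
    exact hhp (MvPolynomial.mem_support_iff.mp hμ)
  have hsupp : ∀ μ ∈ p.support, (μ.support).Nonempty := by
    intro μ hμ
    rw [Finset.nonempty_iff_ne_empty]
    intro hc
    have h1 : μ.degree = 0 := by rw [Finsupp.degree_apply, hc]; simp
    have h2 := hdegsupp μ hμ
    omega
  set pick : (Fin m →₀ ℕ) → Fin m := fun μ =>
    if h : (μ.support).Nonempty then μ.support.min' h else ⟨0, hm⟩ with hpick
  have hpickmem : ∀ μ ∈ p.support, pick μ ∈ μ.support := by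
    intro μ hμ
    rw [hpick]
    simp only [dif_pos (hsupp μ hμ)]
    exact Finset.min'_mem _ _
  set r : Fin m → MvPolynomial (Fin m) R := fun j =>
    ∑ μ ∈ p.support.filter (fun μ => pick μ = j),
      MvPolynomial.monomial (μ - Finsupp.single j 1) (MvPolynomial.coeff μ p) with hr
  have hkey : ∀ (j : Fin m) (μ : Fin m →₀ ℕ), μ ∈ p.support → pick μ = j →
      Finsupp.single j 1 + (μ - Finsupp.single j 1) = μ ∧
        (μ - Finsupp.single j 1).degree = e - 1 := by
    intro j μ hμp hμj
    have hjs : j ∈ μ.support := hμj ▸ hpickmem μ hμp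
    have hjne := Finsupp.mem_support_iff.mp hjs
    set δ : Fin m →₀ ℕ := μ - Finsupp.single j 1 with hδ
    have hadd : Finsupp.single j 1 + δ = μ := by
      ext i
      by_cases hij : i = j
      · subst hij
        rw [Finsupp.add_apply, hδ, Finsupp.tsub_apply, Finsupp.single_eq_same]
        omega
      · rw [Finsupp.add_apply, hδ, Finsupp.tsub_apply,
          Finsupp.single_eq_of_ne' (Ne.symm hij)]
        omega
    refine ⟨hadd, ?_⟩
    have hsum : (∑ i, ((Finsupp.single j (1:ℕ)) i + δ i)) = ∑ i, μ i :=
      Finset.sum_congr rfl (fun i _ => by rw [← Finsupp.add_apply, hadd])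
    rw [Finset.sum_add_distrib] at hsum
    have hs1 : (∑ i, (Finsupp.single j (1:ℕ)) i) = 1 := by
      rw [Finset.sum_eq_single j]
      · rw [Finsupp.single_apply, if_pos rfl]
      · intro b _ hb; rw [Finsupp.single_apply, if_neg (Ne.symm hb)]
      · simp
    have hd := hdegsupp μ hμp
    rw [finsupp_degree_univ] at hd ⊢
    omega
  refine ⟨r, ?_, ?_⟩
  · intro j
    rw [hr]
    apply Submodule.sum_mem
    intro μ hμ
    obtain ⟨hμp, hμj⟩ := Finset.mem_filter.mp hμ
    rw [MvPolynomial.mem_homogeneousSubmodule]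
    exact MvPolynomial.isHomogeneous_monomial _ (hkey j μ hμp hμj).2
  · rw [hr]
    have hswap : ∀ j, MvPolynomial.X (R := R) j *
        ∑ μ ∈ p.support.filter (fun μ => pick μ = j),
          MvPolynomial.monomial (μ - Finsupp.single j 1) (MvPolynomial.coeff μ p)
        = ∑ μ ∈ p.support.filter (fun μ => pick μ = j),
          MvPolynomial.monomial μ (MvPolynomial.coeff μ p) := by
      intro j
      rw [Finset.mul_sum]
      apply Finset.sum_congr rfl
      intro μ hμ
      obtain ⟨hμp, hμj⟩ := Finset.mem_filter.mp hμ
      have hXj : (MvPolynomial.X j : MvPolynomial (Fin m) R)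
          = MvPolynomial.monomial (Finsupp.single j 1) 1 := rfl
      rw [hXj, MvPolynomial.monomial_mul, one_mul, (hkey j μ hμp hμj).1]
    rw [Finset.sum_congr rfl (fun j _ => hswap j)]
    rw [Finset.sum_fiberwise p.support pick (fun μ => MvPolynomial.monomial μ
      (MvPolynomial.coeff μ p))]
    exact p.as_sum

end Homog

section Finiteness

open MvPolynomial

variable {m : ℕ}

theorem relTypeFinite [IsNoetherianRing R] (hm : 0 < m) (z : Fin m → R)
    (I : Ideal R) (hzI : Ideal.span (Set.range z) = I) :
    ∃ N : ℕ, 1 ≤ N ∧ ∀ d : ℕ, N + 1 ≤ d → kosZ1 I z d ≤ kosB1 I z d := by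
  classical
  set φ : MvPolynomial (Fin m) R →ₐ[R] R := MvPolynomial.aeval z with hφ
  set Q : ℕ → Submodule R (MvPolynomial (Fin m) R) := fun e =>
    homogeneousSubmodule (Fin m) R e ⊓ LinearMap.ker φ.toLinearMap with hQdef
  set K : Ideal (MvPolynomial (Fin m) R) :=
    Ideal.span (⋃ e, (Q e : Set (MvPolynomial (Fin m) R))) with hKdef
  obtain ⟨T, hT⟩ := (IsNoetherian.noetherian K : K.FG)
  have hTmem : ∀ t ∈ T, ∃ G : Finset (MvPolynomial (Fin m) R),
      ↑G ⊆ (⋃ e, (Q e : Set (MvPolynomial (Fin m) R))) ∧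
        t ∈ Ideal.span (G : Set (MvPolynomial (Fin m) R)) := by
    intro t ht
    have htK : t ∈ K := by
      rw [← hT]
      exact Submodule.subset_span ht
    rw [hKdef] at htK
    obtain ⟨G, hG1, hG2⟩ := Submodule.mem_span_finite_of_mem_span htK
    exact ⟨G, hG1, hG2⟩
  choose Gf hGf1 hGf2 using hTmem
  set G : Finset (MvPolynomial (Fin m) R) :=
    T.attach.biUnion (fun t => Gf t t.2) with hGdef
  have hGsub : (G : Set (MvPolynomial (Fin m) R)) ⊆
      ⋃ e, (Q e : Set (MvPolynomial (Fin m) R)) := by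
    intro q hq
    rw [hGdef] at hq
    simp only [Finset.coe_biUnion, Set.mem_iUnion] at hq
    obtain ⟨t, ht, hq⟩ := hq
    exact hGf1 t t.2 hq
  have hKG : K = Ideal.span (G : Set (MvPolynomial (Fin m) R)) := by
    apply le_antisymm
    · rw [← hT, Submodule.span_le]
      intro t ht
      simp only [SetLike.mem_coe]
      refine Submodule.span_mono ?_ (hGf2 t ht)
      intro q hq
      rw [hGdef]
      simp only [Finset.coe_biUnion, Set.mem_iUnion]
      exact ⟨⟨t, ht⟩, Finset.mem_attach _ _, hq⟩
    · rw [Ideal.span_le]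
      exact fun q hq => Ideal.subset_span (hGsub hq)
  have hQG : ∀ q ∈ G, q ∈ Q q.totalDegree := by
    intro q hq
    obtain ⟨e, hqe⟩ := Set.mem_iUnion.mp (hGsub hq)
    have hqe' : q ∈ Q e := hqe
    rcases eq_or_ne q 0 with rfl | hq0
    · exact Submodule.zero_mem _
    · have hh := ((MvPolynomial.mem_homogeneousSubmodule _ _).mp
        (Submodule.mem_inf.mp hqe').1).totalDegree hq0
      rw [hh]
      exact hqe'
  set N : ℕ := max 1 (G.sup fun q => q.totalDegree) with hNdef
  have hN1 : 1 ≤ N := le_max_left _ _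
  have hNq : ∀ q ∈ G, q.totalDegree ≤ N :=
    fun q hq => le_trans (Finset.le_sup hq) (le_max_right _ _)
  -- key decomposition lemma
  have key : ∀ d : ℕ, N + 1 ≤ d → ∀ F ∈ Q d,
      ∃ GG : Fin m → MvPolynomial (Fin m) R,
        (∀ j, GG j ∈ Q (d - 1)) ∧ F = ∑ j, MvPolynomial.X j * GG j := by
    intro d hd F hF
    have hFhom : F ∈ homogeneousSubmodule (Fin m) R d := (Submodule.mem_inf.mp hF).1
    have hFK : F ∈ Ideal.span (G : Set (MvPolynomial (Fin m) R)) := by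
      rw [← hKG]
      exact Ideal.subset_span (Set.mem_iUnion.mpr ⟨d, hF⟩)
    obtain ⟨cf, -, hcf⟩ := Submodule.mem_span_finset.mp hFK
    have hdecomp : ∀ q ∈ G, ∃ s : Fin m → MvPolynomial (Fin m) R,
        (∀ j, s j ∈ homogeneousSubmodule (Fin m) R (d - q.totalDegree - 1)) ∧
          MvPolynomial.homogeneousComponent (d - q.totalDegree) (cf q) =
            ∑ j, MvPolynomial.X j * s j := by
      intro q hq
      exact homog_decompose hm (by have := hNq q hq; omega)
        (MvPolynomial.homogeneousComponent_mem _ _)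
    choose sf hsf1 hsf2 using hdecomp
    set GG : Fin m → MvPolynomial (Fin m) R := fun j =>
      ∑ q ∈ G.attach, sf q q.2 j * q with hGG
    have hrw1 : F = ∑ q ∈ G.attach,
        MvPolynomial.homogeneousComponent (d - (q : MvPolynomial (Fin m) R).totalDegree)
          (cf q) * q := by
      have h1 : F = MvPolynomial.homogeneousComponent d F := by
        rw [MvPolynomial.homogeneousComponent_of_mem hFhom, if_pos rfl]
      have h2 : F = ∑ q ∈ G.attach, cf q * (q : MvPolynomial (Fin m) R) := by
        rw [← hcf, ← Finset.sum_attach G (fun q => cf q • q)]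
        apply Finset.sum_congr rfl
        intro q _
        rw [smul_eq_mul]
      conv_lhs => rw [h1]
      conv_lhs => rw [h2]
      rw [map_sum]
      apply Finset.sum_congr rfl
      intro q _
      exact homogeneousComponent_mul_right (by have := hNq q q.2; omega)
        (Submodule.mem_inf.mp (hQG q q.2)).1 (cf q)
    refine ⟨GG, ?_, ?_⟩
    · intro j
      rw [hGG]
      apply Submodule.sum_mem
      intro q _
      rw [hQdef]
      rw [Submodule.mem_inf]
      constructor
      · have hhom := ((MvPolynomial.mem_homogeneousSubmodule _ _).mp (hsf1 q q.2 j)).mul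
          ((MvPolynomial.mem_homogeneousSubmodule _ _).mp
            (Submodule.mem_inf.mp (hQG q q.2)).1)
        rw [MvPolynomial.mem_homogeneousSubmodule]
        have harith : d - (q : MvPolynomial (Fin m) R).totalDegree - 1 +
            (q : MvPolynomial (Fin m) R).totalDegree = d - 1 := by
          have := hNq q q.2; omega
        rwa [harith] at hhom
      · rw [LinearMap.mem_ker, AlgHom.toLinearMap_apply, _root_.map_mul]
        have : φ q = 0 := LinearMap.mem_ker.mp (Submodule.mem_inf.mp (hQG q q.2)).2
        rw [this, mul_zero]
    · rw [hrw1, hGG]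
      have hswap : ∀ j : Fin m, MvPolynomial.X (R := R) j *
          (∑ q ∈ G.attach, sf q q.2 j * (q : MvPolynomial (Fin m) R))
            = ∑ q ∈ G.attach, MvPolynomial.X j * sf q q.2 j *
                (q : MvPolynomial (Fin m) R) := by
        intro j
        rw [Finset.mul_sum]
        exact Finset.sum_congr rfl fun q _ => by ring
      rw [Finset.sum_congr rfl fun j _ => hswap j]
      rw [Finset.sum_comm]
      apply Finset.sum_congr rfl
      intro q _
      rw [hsf2 q q.2, Finset.sum_mul]
  -- conclusion
  refine ⟨N, hN1, ?_⟩
  intro d hd v hv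
  have hd2 : 2 ≤ d := by omega
  obtain ⟨hv1, hv2⟩ := Submodule.mem_inf.mp hv
  have hv1' : ∀ j, v j ∈ I ^ (d - 1) := by
    intro j
    exact Submodule.mem_comap.mp ((Submodule.mem_iInf _).mp hv1 j)
  have hv2' : ∑ j, v j * z j = 0 := by
    have := LinearMap.mem_ker.mp hv2
    rw [sumMul, LinearMap.sum_apply] at this
    simpa [LinearMap.smulRight_apply, smul_eq_mul] using this
  choose A hA1 hA2 using fun j => exists_homog_lift hzI (d - 1) (v j) (hv1' j)
  set F : MvPolynomial (Fin m) R := ∑ j, MvPolynomial.X j * A j with hF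
  have hFQ : F ∈ Q d := by
    rw [hQdef, Submodule.mem_inf]
    constructor
    · rw [hF]
      apply Submodule.sum_mem
      intro j _
      rw [MvPolynomial.mem_homogeneousSubmodule]
      have := (MvPolynomial.isHomogeneous_X R j).mul
        ((MvPolynomial.mem_homogeneousSubmodule _ _).mp (hA1 j))
      have harith : 1 + (d - 1) = d := by omega
      rwa [harith] at this
    · rw [LinearMap.mem_ker, AlgHom.toLinearMap_apply, hF, map_sum]
      have : ∀ j, φ (MvPolynomial.X j * A j) = z j * v j := by
        intro j
        rw [_root_.map_mul, hφ, MvPolynomial.aeval_X, hA2]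
      rw [Finset.sum_congr rfl fun j _ => this j]
      rw [← hv2']
      exact Finset.sum_congr rfl fun j _ => mul_comm _ _
  obtain ⟨GG, hGGQ, hGGrep⟩ := key d hd F hFQ
  set H : Fin m → MvPolynomial (Fin m) R := fun j => A j - GG j with hH
  have hcyc : ∑ j, MvPolynomial.X j * H j = 0 := by
    simp only [hH, mul_sub, Finset.sum_sub_distrib]
    rw [← hF, ← hGGrep, sub_self]
  have hHspan := kosSyz H hcyc
  set π : (Fin m → MvPolynomial (Fin m) R) →ₗ[R] (Fin m → MvPolynomial (Fin m) R) :=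
    LinearMap.pi (fun j => (MvPolynomial.homogeneousComponent (d - 1)).comp
      (LinearMap.proj j)) with hπ
  set E : (Fin m → MvPolynomial (Fin m) R) →ₗ[R] (Fin m → R) :=
    LinearMap.pi (fun j => φ.toLinearMap.comp (LinearMap.proj j)) with hE
  have hπapp : ∀ (w : Fin m → MvPolynomial (Fin m) R) (i : Fin m),
      π w i = MvPolynomial.homogeneousComponent (d - 1) (w i) := by
    intro w i
    rw [hπ, LinearMap.pi_apply, LinearMap.comp_apply, LinearMap.proj_apply]
  have hEapp : ∀ (w : Fin m → MvPolynomial (Fin m) R) (i : Fin m),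
      E w i = φ (w i) := by
    intro w i
    rw [hE, LinearMap.pi_apply, LinearMap.comp_apply, LinearMap.proj_apply,
      AlgHom.toLinearMap_apply]
  have hzmem : ∀ i, z i ∈ I := by
    intro i
    rw [← hzI]
    exact Ideal.subset_span (Set.mem_range_self i)
  have hspanB : Submodule.span R (kosSyzSet m R) ≤
      Submodule.comap π (Submodule.comap E (kosB1 I z d)) := by
    rw [Submodule.span_le]
    rintro w ⟨j, l, M, rfl⟩
    simp only [SetLike.mem_coe, Submodule.mem_comap]
    have hXj : (MvPolynomial.X j : MvPolynomial (Fin m) R)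
        = MvPolynomial.monomial (Finsupp.single j 1) 1 := rfl
    have hXl : (MvPolynomial.X l : MvPolynomial (Fin m) R)
        = MvPolynomial.monomial (Finsupp.single l 1) 1 := rfl
    have hmj : (MvPolynomial.monomial M 1 : MvPolynomial (Fin m) R) * MvPolynomial.X j
        = MvPolynomial.monomial (M + Finsupp.single j 1) 1 := by
      rw [hXj, MvPolynomial.monomial_mul, mul_one]
    have hml : (MvPolynomial.monomial M 1 : MvPolynomial (Fin m) R) * MvPolynomial.X l
        = MvPolynomial.monomial (M + Finsupp.single l 1) 1 := by
      rw [hXl, MvPolynomial.monomial_mul, mul_one]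
    have hdeg1 : ∀ i : Fin m, (M + Finsupp.single i 1).degree = M.degree + 1 := by
      intro i
      rw [finsupp_degree_univ, finsupp_degree_univ]
      rw [Finset.sum_congr rfl (fun t _ => Finsupp.add_apply M (Finsupp.single i 1) t)]
      rw [Finset.sum_add_distrib]
      congr 1
      rw [Finset.sum_eq_single i]
      · rw [Finsupp.single_eq_same]
      · intro b _ hb; rw [Finsupp.single_eq_of_ne' (Ne.symm hb)]
      · simp
    have hmono : ∀ i : Fin m, MvPolynomial.homogeneousComponent (d - 1)
        (MvPolynomial.monomial (M + Finsupp.single i 1) (1:R))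
          = if d - 1 = (M + Finsupp.single i 1).degree
            then MvPolynomial.monomial (M + Finsupp.single i 1) (1:R) else 0 := by
      intro i
      exact MvPolynomial.homogeneousComponent_of_mem
        ((MvPolynomial.mem_homogeneousSubmodule _ _).mpr
          (MvPolynomial.isHomogeneous_monomial _ rfl))
    by_cases hcond : d - 1 = M.degree + 1
    · -- the monomials survive
      have hπw : π (Pi.single l (MvPolynomial.monomial M 1 * MvPolynomial.X j) -
          Pi.single j (MvPolynomial.monomial M 1 * MvPolynomial.X l))
            = Pi.single l (MvPolynomial.monomial M 1 * MvPolynomial.X j) -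
              Pi.single j (MvPolynomial.monomial M 1 * MvPolynomial.X l) := by
        funext i
        rw [hπapp, Pi.sub_apply, map_sub]
        congr 1
        · rw [Pi.apply_single (fun _ p => MvPolynomial.homogeneousComponent (d-1) p)
            (fun _ => map_zero _) l _ i]
          rw [hmj, hmono j, if_pos (by rw [hdeg1 j]; omega), ← hmj]
        · rw [Pi.apply_single (fun _ p => MvPolynomial.homogeneousComponent (d-1) p)
            (fun _ => map_zero _) j _ i]
          rw [hml, hmono l, if_pos (by rw [hdeg1 l]; omega), ← hml]
      rw [hπw]
      set u : R := φ (MvPolynomial.monomial M 1) with hu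
      have humem : u ∈ I ^ (d - 2) := by
        have : M.degree = d - 2 := by omega
        rw [hu, hφ]
        exact aeval_mem_pow hzmem ((MvPolynomial.mem_homogeneousSubmodule _ _).mpr
          (MvPolynomial.isHomogeneous_monomial _ this))
      have hEw : E (Pi.single l (MvPolynomial.monomial M 1 * MvPolynomial.X j) -
          Pi.single j (MvPolynomial.monomial M 1 * MvPolynomial.X l))
            = Pi.single l (z j * u) - Pi.single j (z l * u) := by
        funext i
        rw [hEapp, Pi.sub_apply, map_sub, Pi.sub_apply]
        congr 1
        · rw [Pi.apply_single (fun _ p => φ p) (fun _ => map_zero _) l _ i]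
          rw [_root_.map_mul, hφ, MvPolynomial.aeval_X, ← hφ, ← hu, mul_comm]
        · rw [Pi.apply_single (fun _ p => φ p) (fun _ => map_zero _) j _ i]
          rw [_root_.map_mul, hφ, MvPolynomial.aeval_X, ← hφ, ← hu, mul_comm]
      rw [hEw]
      exact Submodule.subset_span ⟨j, l, u, humem, rfl⟩
    · -- everything dies
      have hπw : π (Pi.single l (MvPolynomial.monomial M 1 * MvPolynomial.X j) -
          Pi.single j (MvPolynomial.monomial M 1 * MvPolynomial.X l)) = 0 := by
        funext i
        rw [hπapp, Pi.sub_apply, map_sub]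
        rw [Pi.apply_single (fun _ p => MvPolynomial.homogeneousComponent (d-1) p)
          (fun _ => map_zero _) l _ i]
        rw [Pi.apply_single (fun _ p => MvPolynomial.homogeneousComponent (d-1) p)
          (fun _ => map_zero _) j _ i]
        rw [hmj, hml, hmono j, hmono l, if_neg (by rw [hdeg1 j]; omega),
          if_neg (by rw [hdeg1 l]; omega)]
        simp
      rw [hπw, map_zero]
      exact Submodule.zero_mem _
  have hπH : π H = H := by
    funext i
    rw [hπapp]
    have : H i ∈ homogeneousSubmodule (Fin m) R (d - 1) :=
      Submodule.sub_mem _ (hA1 i) (Submodule.mem_inf.mp (hGGQ i)).1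
    rw [MvPolynomial.homogeneousComponent_of_mem this, if_pos rfl]
  have hEH : E H = v := by
    funext i
    rw [hEapp, hH]
    have hGG0 : φ (GG i) = 0 := LinearMap.mem_ker.mp (Submodule.mem_inf.mp (hGGQ i)).2
    rw [map_sub, hA2, hGG0, sub_zero]
  have := hspanB hHspan
  rw [Submodule.mem_comap, Submodule.mem_comap, hπH, hEH] at this
  exact this

end Finiteness


section Descent

theorem mul_span_range_rep {n : ℕ} (g : Fin n → R) (Nid : Ideal R) :
    ∀ y ∈ Ideal.span (Set.range g) * Nid, ∃ b : Fin n → R,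
      (∀ j, b j ∈ Nid) ∧ y = ∑ j, g j * b j := by
  intro y hy
  refine Submodule.mul_induction_on hy ?_ ?_
  · intro a ha x hx
    obtain ⟨c, hc⟩ := (mem_span_range_iff_exists_fun R).mp ha
    refine ⟨fun j => c j * x, fun j => Ideal.mul_mem_left _ _ hx, ?_⟩
    rw [← hc, Finset.sum_mul]
    apply Finset.sum_congr rfl
    intro j _
    rw [smul_eq_mul]
    ring
  · rintro x y ⟨b, hb, rfl⟩ ⟨b', hb', rfl⟩
    refine ⟨b + b', fun j => Submodule.add_mem _ (hb j) (hb' j), ?_⟩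
    rw [← Finset.sum_add_distrib]
    apply Finset.sum_congr rfl
    intro j _
    rw [Pi.add_apply]
    ring

theorem descent_step {n : ℕ} (g : Fin n → R) (f : R) (J I : Ideal R)
    (hJ : J = Ideal.span (Set.range g)) (hI : I = J ⊔ Ideal.span {f})
    {d : ℕ} (hd2 : 2 ≤ d)
    (hZB : kosZ1 I (Fin.snoc g f : Fin (n + 1) → R) d ≤
      kosB1 I (Fin.snoc g f : Fin (n + 1) → R) d)
    (hfd : f ^ d ∈ J * I ^ (d - 1)) : f ^ (d - 1) ∈ J * I ^ (d - 2) := by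
  classical
  set z : Fin (n + 1) → R := Fin.snoc g f with hz
  have hfI : f ∈ I := by
    rw [hI]
    exact Submodule.mem_sup_right (Ideal.subset_span rfl)
  rw [hJ] at hfd
  obtain ⟨b, hb, hrep⟩ := mul_span_range_rep g (I ^ (d - 1)) (f ^ d) hfd
  set v : Fin (n + 1) → R := Fin.snoc b (-(f ^ (d - 1))) with hv
  have hvZ : v ∈ kosZ1 I z d := by
    unfold kosZ1
    refine Submodule.mem_inf.mpr ⟨?_, ?_⟩
    · refine (Submodule.mem_iInf _).mpr ?_
      intro j
      rw [Submodule.mem_comap]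
      refine Fin.lastCases ?_ ?_ j
      · show v (Fin.last n) ∈ _
        rw [hv, Fin.snoc_last]
        exact Submodule.neg_mem _ (Ideal.pow_mem_pow hfI _)
      · intro i
        show v (Fin.castSucc i) ∈ _
        rw [hv, Fin.snoc_castSucc]
        exact hb i
    · rw [LinearMap.mem_ker]
      have hsm : sumMul z v = ∑ j, v j * z j := by
        rw [sumMul, LinearMap.sum_apply]
        apply Finset.sum_congr rfl
        intro j _
        rw [LinearMap.smulRight_apply, LinearMap.proj_apply, smul_eq_mul]
      rw [hsm, Fin.sum_univ_castSucc]
      have hterm : ∀ i : Fin n, v (Fin.castSucc i) * z (Fin.castSucc i) = b i * g i := by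
        intro i
        rw [hv, hz, Fin.snoc_castSucc, Fin.snoc_castSucc]
      rw [Finset.sum_congr rfl fun i _ => hterm i]
      have hlast : v (Fin.last n) * z (Fin.last n) = -(f ^ (d - 1)) * f := by
        rw [hv, hz, Fin.snoc_last, Fin.snoc_last]
      rw [hlast]
      have hfd1 : f ^ (d - 1) * f = f ^ d := by
        rw [← pow_succ]
        congr 1
        omega
      have hbg : ∑ i, b i * g i = f ^ d := by
        rw [hrep]
        exact Finset.sum_congr rfl fun i _ => mul_comm _ _
      rw [hbg, neg_mul, hfd1]
      ring
  have hvB := hZB hvZ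
  have hlastle : kosB1 I z d ≤ Submodule.comap
      (LinearMap.proj (Fin.last n) : (Fin (n + 1) → R) →ₗ[R] R)
        (J * I ^ (d - 2) : Ideal R) := by
    unfold kosB1
    rw [Submodule.span_le]
    rintro w ⟨j, l, u, hu, rfl⟩
    simp only [SetLike.mem_coe, Submodule.mem_comap, LinearMap.proj_apply, Pi.sub_apply]
    have hgJ : ∀ (i : Fin (n + 1)), i ≠ Fin.last n → z i ∈ J := by
      intro i hi
      obtain ⟨i', rfl⟩ := Fin.eq_castSucc_of_ne_last hi
      rw [hz, Fin.snoc_castSucc, hJ]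
      exact Ideal.subset_span (Set.mem_range_self i')
    by_cases hl : l = Fin.last n <;> by_cases hj : j = Fin.last n
    · subst hl; subst hj
      rw [sub_self]
      exact Submodule.zero_mem _
    · subst hl
      rw [Pi.single_eq_same, Pi.single_eq_of_ne (fun hc => hj hc.symm), sub_zero]
      exact Ideal.mul_mem_mul (hgJ j hj) hu
    · subst hj
      rw [Pi.single_eq_same, Pi.single_eq_of_ne (fun hc => hl hc.symm), zero_sub]
      exact Submodule.neg_mem _ (Ideal.mul_mem_mul (hgJ l hl) hu)
    · rw [Pi.single_eq_of_ne (fun hc => hl hc.symm),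
        Pi.single_eq_of_ne (fun hc => hj hc.symm), sub_self]
      exact Submodule.zero_mem _
  have hfin := hlastle hvB
  rw [Submodule.mem_comap, LinearMap.proj_apply] at hfin
  rw [hv, Fin.snoc_last] at hfin
  exact (Submodule.neg_mem_iff _).mp hfin

end Descent

theorem stmt18 {R : Type*} [CommRing R] [IsNoetherianRing R] [IsLocalRing R]
    {n : ℕ} (hn : 2 ≤ n) (g : Fin n → R) (f : R) (J I : Ideal R)
    (hJ : J = Ideal.span (Set.range g)) (hI : I = J ⊔ Ideal.span {f})
    (hred : ∃ r : ℕ, I ^ (r + 1) = J * I ^ r)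
    (L : ℕ) (hL : relationTypeKoszul I (Fin.snoc g f : Fin (n + 1) → R) = L) :
    f ^ L ∈ J * I ^ (L - 1) := by
  classical
  set z : Fin (n + 1) → R := Fin.snoc g f with hz
  have hfI : f ∈ I := by
    rw [hI]
    exact Submodule.mem_sup_right (Ideal.subset_span rfl)
  have hzI : Ideal.span (Set.range z) = I := by
    have hrange : Set.range z = Set.range g ∪ {f} := by
      ext x
      constructor
      · rintro ⟨i, rfl⟩
        rcases eq_or_ne i (Fin.last n) with rfl | hi
        · right
          rw [hz]
          simp [Fin.snoc_last]
        · obtain ⟨j, rfl⟩ := Fin.eq_castSucc_of_ne_last hi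
          left
          exact ⟨j, by rw [hz, Fin.snoc_castSucc]⟩
      · rintro (⟨i, rfl⟩ | hx)
        · exact ⟨i.castSucc, by rw [hz, Fin.snoc_castSucc]⟩
        · rw [Set.mem_singleton_iff] at hx
          subst hx
          exact ⟨Fin.last n, by rw [hz, Fin.snoc_last]⟩
    rw [hrange, Ideal.span_union, ← hJ, ← hI]
  obtain ⟨N, hN1, hNall⟩ := relTypeFinite (Nat.succ_pos n) z I hzI
  have hset : {L' | 1 ≤ L' ∧ ∀ d, L' + 1 ≤ d → kosZ1 I z d ≤ kosB1 I z d}.Nonempty :=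
    ⟨N, hN1, hNall⟩
  have hLmem := Nat.sInf_mem hset
  unfold relationTypeKoszul at hL
  rw [hL] at hLmem
  obtain ⟨hL1, hLB⟩ := hLmem
  obtain ⟨r, hr⟩ := hred
  have hstart : ∀ s : ℕ, f ^ (r + 1 + s) ∈ J * I ^ (r + s) := by
    intro s
    induction s with
    | zero =>
      simp only [Nat.add_zero]
      rw [← hr]
      exact Ideal.pow_mem_pow hfI _
    | succ s ihs =>
      have h1 : f * f ^ (r + 1 + s) ∈ I * (J * I ^ (r + s)) := Ideal.mul_mem_mul hfI ihs
      have h2 : I * (J * I ^ (r + s)) = J * I ^ (r + s + 1) := by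
        rw [pow_succ]
        ring
      rw [h2] at h1
      have h3 : f ^ ((r + 1 + s) + 1) = f * f ^ (r + 1 + s) := by
        rw [pow_succ, mul_comm]
      show f ^ ((r + 1 + s) + 1) ∈ J * I ^ ((r + s) + 1)
      rw [h3]
      exact h1
  have hdown : ∀ k : ℕ, f ^ (L + k) ∈ J * I ^ (L + k - 1) → f ^ L ∈ J * I ^ (L - 1) := by
    intro k
    induction k with
    | zero => exact fun h => h
    | succ k ihk =>
      intro h
      apply ihk
      have e1 : L + (k + 1) - 1 = L + k := by omega
      rw [e1] at h
      have hd2 : 2 ≤ L + k + 1 := by omega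
      have hstep := descent_step g f J I hJ hI hd2 (hLB (L + k + 1) (by omega)) h
      have e2 : L + k + 1 - 1 = L + k := by omega
      have e3 : L + k + 1 - 2 = L + k - 1 := by omega
      rwa [e2, e3] at hstep
  have hMxL : L ≤ max L (r + 1) := le_max_left _ _
  have hMxr : r + 1 ≤ max L (r + 1) := le_max_right _ _
  have hkey := hstart (max L (r + 1) - (r + 1))
  have h1 : r + 1 + (max L (r + 1) - (r + 1)) = max L (r + 1) := by omega
  have h2 : r + (max L (r + 1) - (r + 1)) = max L (r + 1) - 1 := by omega
  rw [h1, h2] at hkey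
  apply hdown (max L (r + 1) - L)
  have h3 : L + (max L (r + 1) - L) = max L (r + 1) := by omega
  rw [h3]
  exact hkey
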